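/- Let Y ∈ ℝ^{d×N}, D ∈ ℝ^{d×K} be fixed, and define h : ℝ^{K×N} → ℝ by h(X) = (1/2)( ‖Y − DX‖_F² + Σ_{c=1}^C ( ‖(Y − D W_c X)P_c‖_F² + Σ_{j≠c} ‖D W_j X P_c‖_F² ) ). Then h is differentiable and its gradient with respect to the Frobenius inner product at X equals (DᵀD + Σ_{j=1}^C W_j DᵀD W_j)·X − (DᵀY + Σ_{c=1}^C W_c Dᵀ Y P_c), i.e., ∇h(X) = M(DᵀD)X − M(DᵀY), where M(·) denotes doubling of the diagonal blocks determined by the class selectors. -/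

import Mathlib

open Matrix Finset

attribute [local instance] Matrix.normedAddCommGroup Matrix.normedSpace

/-- Squared Frobenius norm: `‖A‖_F² = trace (A * Aᵀ)`. -/
noncomputable def frobSq {m n : Type*} [Fintype m] [Fintype n] (A : Matrix m n ℝ) : ℝ :=
  Matrix.trace (A * Aᵀ)

/-- Diagonal 0/1 selector matrix for class `j` determined by a labeling `cl`. -/
noncomputable def sel {K C : ℕ} (cl : Fin K → Fin C) (j : Fin C) :
    Matrix (Fin K) (Fin K) ℝ :=
  Matrix.diagonal fun i => if cl i = j then (1 : ℝ) else 0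

/-- The continuous linear functional `H ↦ ⟨G, H⟩_F = trace (G * Hᵀ)` given by pairing with `G`
in the Frobenius inner product. -/
noncomputable def frobCLM {m n : Type*} [Fintype m] [Fintype n]
    (G : Matrix m n ℝ) : Matrix m n ℝ →L[ℝ] ℝ :=
  LinearMap.toContinuousLinearMap
  { toFun := fun H => Matrix.trace (G * Hᵀ)
    map_add' := fun H₁ H₂ => by simp [Matrix.transpose_add, Matrix.mul_add]
    map_smul' := fun r H => by simp [Matrix.transpose_smul, Matrix.mul_smul] }

section aux

variable {m n k p : Type*} [Fintype m] [Fintype n] [Fintype k] [Fintype p]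

lemma frobCLM_apply (G H : Matrix m n ℝ) : frobCLM G H = Matrix.trace (G * Hᵀ) := by
  simp [frobCLM]

lemma frobCLM_add (G₁ G₂ : Matrix m n ℝ) :
    frobCLM (G₁ + G₂) = frobCLM G₁ + frobCLM G₂ := by
  ext H; simp [frobCLM_apply, Matrix.add_mul]

lemma frobCLM_smul (r : ℝ) (G : Matrix m n ℝ) :
    frobCLM (r • G) = r • frobCLM G := by
  ext H; simp [frobCLM_apply, Matrix.smul_mul]

lemma frobCLM_sum {ι : Type*} (s : Finset ι) (f : ι → Matrix m n ℝ) :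
    frobCLM (∑ i ∈ s, f i) = ∑ i ∈ s, frobCLM (f i) := by
  classical
  induction s using Finset.induction with
  | empty => ext H; simp [frobCLM_apply]
  | insert _ _ h ih => rw [Finset.sum_insert h, Finset.sum_insert h, frobCLM_add, ih]

/-- Frobenius pairing as a two-argument continuous linear map. -/
noncomputable def frobCLM₂ (m n : Type*) [Fintype m] [Fintype n] :
    Matrix m n ℝ →L[ℝ] Matrix m n ℝ →L[ℝ] ℝ :=
  LinearMap.toContinuousLinearMap
  { toFun := frobCLM
    map_add' := frobCLM_add
    map_smul' := frobCLM_smul }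

lemma frobCLM₂_eq (G : Matrix m n ℝ) : frobCLM₂ m n G = frobCLM G := by
  rw [frobCLM₂]
  exact congrFun (LinearMap.coe_toContinuousLinearMap' _) G

lemma frobCLM₂_apply (G H : Matrix m n ℝ) :
    frobCLM₂ m n G H = Matrix.trace (G * Hᵀ) := by
  rw [frobCLM₂_eq, frobCLM_apply]

/-- Key derivative lemma: `X ↦ ‖A X B + E‖_F²` has Frobenius gradient `2 Aᵀ (A X B + E) Bᵀ`. -/
lemma hasFDerivAt_frobSq_affine (A : Matrix m k ℝ) (B : Matrix n p ℝ) (E : Matrix m p ℝ)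
    (F : Matrix k n ℝ → Matrix m p ℝ) (hF : ∀ Z, F Z = A * Z * B + E) (X : Matrix k n ℝ) :
    HasFDerivAt (fun Z => frobSq (F Z)) ((2 : ℝ) • frobCLM (Aᵀ * F X * Bᵀ)) X := by
  set lin : Matrix k n ℝ →ₗ[ℝ] Matrix m p ℝ :=
    { toFun := fun Z => A * Z * B
      map_add' := fun Z₁ Z₂ => by simp [Matrix.mul_add, Matrix.add_mul]
      map_smul' := fun r Z => by simp [Matrix.mul_smul, Matrix.smul_mul] } with hlin
  set L := LinearMap.toContinuousLinearMap lin with hL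
  have hLa : ∀ Z, L Z = A * Z * B := fun Z => by
    rw [hL]
    exact congrFun (LinearMap.coe_toContinuousLinearMap' _) Z
  have hg : HasFDerivAt F L X := by
    have h1 : HasFDerivAt (fun Z => L Z + E) L X := L.hasFDerivAt.add_const E
    refine h1.congr_of_eventuallyEq (Filter.Eventually.of_forall fun Z => ?_)
    show F Z = L Z + E
    rw [hF, hLa]
  have hb := (frobCLM₂ m p).isBoundedBilinearMap
  have hcomp := (hb.hasFDerivAt (F X, F X)).comp X (hg.prodMk hg)
  have heq : (fun Z => frobSq (F Z)) =
      (fun q : Matrix m p ℝ × Matrix m p ℝ => frobCLM₂ m p q.1 q.2) ∘ (fun Z => (F Z, F Z)) := by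
    funext Z; simp [frobSq, frobCLM₂_apply, Function.comp]
  rw [heq]
  refine hcomp.congr_fderiv ?_
  symm
  ext H
  rw [ContinuousLinearMap.smul_apply]
  erw [ContinuousLinearMap.comp_apply,
    ContinuousLinearMap.prod_apply, hb.deriv_apply]
  simp only [frobCLM₂_apply, frobCLM_apply, hLa, smul_eq_mul]
  have t1 : Matrix.trace (F X * (A * H * B)ᵀ) = Matrix.trace (Aᵀ * F X * Bᵀ * Hᵀ) := by
    conv_lhs => rw [Matrix.transpose_mul, Matrix.transpose_mul, ← Matrix.mul_assoc,
      ← Matrix.mul_assoc, Matrix.trace_mul_cycle]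
    rw [Matrix.mul_assoc Aᵀ (F X) Bᵀ]
  have t2 : Matrix.trace (A * H * B * (F X)ᵀ) = Matrix.trace (Aᵀ * F X * Bᵀ * Hᵀ) := by
    rw [← Matrix.trace_transpose (A * H * B * (F X)ᵀ), Matrix.transpose_mul,
      Matrix.transpose_transpose, t1]
  erw [frobCLM₂_apply, frobCLM₂_apply, hLa]
  rw [t1, t2]; ring

lemma sel_transpose {K C : ℕ} (cl : Fin K → Fin C) (j : Fin C) :
    (sel cl j)ᵀ = sel cl j := by
  simp [sel]

lemma sel_mul_self {K C : ℕ} (cl : Fin K → Fin C) (j : Fin C) :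
    sel cl j * sel cl j = sel cl j := by
  rw [sel, Matrix.diagonal_mul_diagonal]
  refine congrArg Matrix.diagonal (funext fun i => ?_)
  split <;> simp

lemma sum_sel {K C : ℕ} (cl : Fin K → Fin C) :
    ∑ j : Fin C, sel cl j = 1 := by
  ext i i'
  by_cases hii : i = i'
  · subst hii
    simp [sel, Matrix.sum_apply, Matrix.diagonal_apply, Matrix.one_apply]
  · simp [sel, Matrix.sum_apply, Matrix.diagonal_apply, Matrix.one_apply, hii]

end aux

/-- The FDDL fidelity `h(X) = ½(‖Y−DX‖² + Σ_c (‖(Y−D W_c X)P_c‖² + Σ_{j≠c}‖D W_j X P_c‖²))`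
is differentiable in `X`, with gradient (w.r.t. the Frobenius inner product)
`M(DᵀD)·X − M(DᵀY) = (DᵀD + Σ_j W_j DᵀD W_j)X − (DᵀY + Σ_c W_c DᵀY P_c)`. -/
theorem stmt2 {d N K C : ℕ}
    (Y : Matrix (Fin d) (Fin N) ℝ) (D : Matrix (Fin d) (Fin K) ℝ)
    (cl : Fin K → Fin C) (lab : Fin N → Fin C)
    (W : Fin C → Matrix (Fin K) (Fin K) ℝ) (hW : W = sel cl)
    (P : Fin C → Matrix (Fin N) (Fin N) ℝ) (hP : P = sel lab)
    (h : Matrix (Fin K) (Fin N) ℝ → ℝ)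
    (hh : ∀ X : Matrix (Fin K) (Fin N) ℝ,
      h X = (1/2) * (frobSq (Y - D * X) +
        ∑ c : Fin C, (frobSq ((Y - D * W c * X) * P c) +
          ∑ j ∈ Finset.univ.erase c, frobSq (D * W j * X * P c))))
    (X : Matrix (Fin K) (Fin N) ℝ) :
    HasFDerivAt h
      (frobCLM ((Dᵀ * D + ∑ j : Fin C, W j * (Dᵀ * D) * W j) * X
        - (Dᵀ * Y + ∑ c : Fin C, W c * (Dᵀ * Y) * P c))) X := by
  have hWt : ∀ c, (W c)ᵀ = W c := by subst hW; exact sel_transpose cl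
  have hPt : ∀ c, (P c)ᵀ = P c := by subst hP; exact sel_transpose lab
  have hP2 : ∀ c, P c * P c = P c := by subst hP; exact sel_mul_self lab
  have hPsum : ∑ c : Fin C, P c = 1 := by subst hP; exact sum_sel lab
  have hfun : h = fun X => (1/2) * (frobSq (Y - D * X) +
        ∑ c : Fin C, (frobSq ((Y - D * W c * X) * P c) +
          ∑ j ∈ Finset.univ.erase c, frobSq (D * W j * X * P c))) := funext hh
  rw [hfun]
  have h0 : HasFDerivAt (fun X => frobSq (Y - D * X))
      ((2 : ℝ) • frobCLM ((-D)ᵀ * (Y - D * X) * (1 : Matrix (Fin N) (Fin N) ℝ)ᵀ)) X :=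
    hasFDerivAt_frobSq_affine (-D) 1 Y _
      (fun Z => by rw [Matrix.mul_one, Matrix.neg_mul, neg_add_eq_sub]) X
  have h1 : ∀ c, HasFDerivAt (fun X => frobSq ((Y - D * W c * X) * P c))
      ((2 : ℝ) • frobCLM ((-(D * W c))ᵀ * ((Y - D * W c * X) * P c) * (P c)ᵀ)) X :=
    fun c => hasFDerivAt_frobSq_affine (-(D * W c)) (P c) (Y * P c) _
      (fun Z => by rw [Matrix.sub_mul, Matrix.neg_mul, Matrix.neg_mul, neg_add_eq_sub]) X
  have h2 : ∀ c j, HasFDerivAt (fun X => frobSq (D * W j * X * P c))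
      ((2 : ℝ) • frobCLM ((D * W j)ᵀ * (D * W j * X * P c) * (P c)ᵀ)) X :=
    fun c j => hasFDerivAt_frobSq_affine (D * W j) (P c) 0 _
      (fun Z => by rw [add_zero]) X
  have hc : ∀ c, HasFDerivAt
      (fun X => frobSq ((Y - D * W c * X) * P c) +
        ∑ j ∈ Finset.univ.erase c, frobSq (D * W j * X * P c))
      ((2 : ℝ) • frobCLM ((-(D * W c))ᵀ * ((Y - D * W c * X) * P c) * (P c)ᵀ) +
        ∑ j ∈ Finset.univ.erase c,
          (2 : ℝ) • frobCLM ((D * W j)ᵀ * (D * W j * X * P c) * (P c)ᵀ)) X :=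
    fun c => (h1 c).add (HasFDerivAt.fun_sum fun j _ => h2 c j)
  have htot := ((h0.add (HasFDerivAt.fun_sum (u := Finset.univ) fun c _ => hc c)).const_mul (1/2 : ℝ))
  refine htot.congr_fderiv ?_
  symm
  -- simplify each gradient matrix
  have e0 : (-D)ᵀ * (Y - D * X) * (1 : Matrix (Fin N) (Fin N) ℝ)ᵀ
      = (Dᵀ * D) * X - Dᵀ * Y := by
    rw [Matrix.transpose_one, Matrix.mul_one, Matrix.transpose_neg, Matrix.neg_mul,
      Matrix.mul_sub, neg_sub, ← Matrix.mul_assoc]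
  have e1 : ∀ c, (-(D * W c))ᵀ * ((Y - D * W c * X) * P c) * (P c)ᵀ
      = W c * (Dᵀ * D) * W c * X * P c - W c * (Dᵀ * Y) * P c := by
    intro c
    rw [Matrix.transpose_neg, Matrix.transpose_mul, hWt, hPt]
    simp only [Matrix.neg_mul, Matrix.sub_mul, Matrix.mul_sub, Matrix.mul_assoc, hP2, neg_sub]
    abel
  have e2 : ∀ c j, (D * W j)ᵀ * (D * W j * X * P c) * (P c)ᵀ
      = W j * (Dᵀ * D) * W j * X * P c := by
    intro c j
    rw [Matrix.transpose_mul, hWt, hPt]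
    simp only [Matrix.mul_assoc, hP2]
  simp only [e0, e1, e2]
  -- collapse the scalar multiples and sums into a single frobCLM
  have key : (Dᵀ * D + ∑ j : Fin C, W j * (Dᵀ * D) * W j) * X
        - (Dᵀ * Y + ∑ c : Fin C, W c * (Dᵀ * Y) * P c)
      = (1/2 : ℝ) • ((2 : ℝ) • (Dᵀ * D * X - Dᵀ * Y) +
        ∑ i : Fin C, ((2 : ℝ) • (W i * (Dᵀ * D) * W i * X * P i - W i * (Dᵀ * Y) * P i) +
          ∑ j ∈ Finset.univ.erase i, (2 : ℝ) • (W j * (Dᵀ * D) * W j * X * P i))) := by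
    -- pure matrix identity
    simp only [← Finset.smul_sum, ← smul_add, smul_smul]
    norm_num
    have hswap : ∑ c : Fin C, ∑ j : Fin C, W j * (Dᵀ * D) * W j * X * P c
        = (∑ j : Fin C, W j * (Dᵀ * D) * W j) * X := by
      rw [Finset.sum_comm, Matrix.sum_mul]
      refine Finset.sum_congr rfl fun j _ => ?_
      rw [← Matrix.mul_sum, hPsum, Matrix.mul_one]
    rw [hswap, Matrix.add_mul]
    abel
  have hG : frobCLM ((Dᵀ * D + ∑ j : Fin C, W j * (Dᵀ * D) * W j) * X
        - (Dᵀ * Y + ∑ c : Fin C, W c * (Dᵀ * Y) * P c))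
      = (1/2 : ℝ) • ((2 : ℝ) • frobCLM (Dᵀ * D * X - Dᵀ * Y) +
        ∑ i : Fin C, ((2 : ℝ) • frobCLM (W i * (Dᵀ * D) * W i * X * P i - W i * (Dᵀ * Y) * P i) +
          ∑ j ∈ Finset.univ.erase i, (2 : ℝ) • frobCLM (W j * (Dᵀ * D) * W j * X * P i))) := by
    rw [key]
    simp only [frobCLM_smul, frobCLM_add, frobCLM_sum]
  exact hG
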